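/- Let m : ℂ₊ → ℂ be a Herglotz function (analytic on the open upper half-plane with values in the closed upper half-plane, not identically real). If the normal boundary limit lim_{ε↓0} m(λ+iε) exists and equals 0 for all λ in a subset of ℝ of positive Lebesgue measure, then m ≡ 0. -/

import Mathlib

open MeasureTheory Set Filter Topology Complex

noncomputable section
namespace HerglotzAux2718

def UHP : Set ℂ := {z : ℂ | 0 < z.im}

lemma isOpen_UHP : IsOpen UHP := isOpen_lt continuous_const Complex.continuous_im

lemma mem_UHP {x y : ℝ} (hy : 0 < y) : (x : ℂ) + y * Complex.I ∈ UHP := by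
  simp [UHP, hy]

lemma comp_line {F : ℂ → ℂ} {F' z₀ : ℂ} (hF : HasDerivAt F F' z₀)
    {γ : ℝ → ℂ} {d : ℂ} {t₀ : ℝ} (hγz : γ t₀ = z₀) (hγ : HasDerivAt γ d t₀) :
    HasDerivAt (fun t => F (γ t)) (d * F') t₀ := by
  have h1 : HasFDerivAt F ((1 : ℂ →L[ℂ] ℂ).smulRight F') (γ t₀) := by
    rw [hγz]; exact hF.hasFDerivAt
  have := (h1.restrictScalars ℝ).comp_hasDerivAt t₀ hγ
  simpa [smul_eq_mul, mul_comm, Function.comp_def] using this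

lemma hasDerivAt_re' {F : ℝ → ℂ} {F' : ℂ} {t₀ : ℝ} (h : HasDerivAt F F' t₀) :
    HasDerivAt (fun t => (F t).re) F'.re t₀ := by
  simpa [Function.comp_def] using (Complex.reCLM.hasFDerivAt.comp_hasDerivAt t₀ h)

lemma hasDerivAt_im' {F : ℝ → ℂ} {F' : ℂ} {t₀ : ℝ} (h : HasDerivAt F F' t₀) :
    HasDerivAt (fun t => (F t).im) F'.im t₀ := by
  simpa [Function.comp_def] using (Complex.imCLM.hasFDerivAt.comp_hasDerivAt t₀ h)

lemma hasDerivAt_vert (x y : ℝ) :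
    HasDerivAt (fun t : ℝ => (x : ℂ) + t * Complex.I) Complex.I y := by
  simpa using (((Complex.ofRealCLM.hasDerivAt (x := y))).mul_const Complex.I).const_add (x:ℂ)

lemma hasDerivAt_horiz (x y : ℝ) :
    HasDerivAt (fun t : ℝ => (t : ℂ) + y * Complex.I) 1 x := by
  simpa using ((Complex.ofRealCLM.hasDerivAt (x := x))).add_const ((y:ℂ) * Complex.I)

/-- local complex logarithm derivative -/
lemma hasDerivAt_L {g : ℂ → ℂ} (hg : DifferentiableOn ℂ g UHP)
    (hne : ∀ z ∈ UHP, g z ≠ 0) {z₀ : ℂ} (hz₀ : z₀ ∈ UHP) :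
    ∃ c : ℂ, ‖c‖ = 1 ∧
      HasDerivAt (fun z => Complex.log (c * g z)) (deriv g z₀ / g z₀) z₀ := by
  have hgz : g z₀ ≠ 0 := hne z₀ hz₀
  have hd : HasDerivAt g (deriv g z₀) z₀ :=
    (hg.differentiableAt (isOpen_UHP.mem_nhds hz₀)).hasDerivAt
  have key : ∀ c : ℂ, c ≠ 0 → c * g z₀ ∈ slitPlane →
      HasDerivAt (fun z => Complex.log (c * g z)) (deriv g z₀ / g z₀) z₀ := by
    intro c hc hcs
    have h1 : HasDerivAt (fun z => c * g z) (c * deriv g z₀) z₀ := hd.const_mul c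
    have := h1.clog hcs
    rwa [mul_div_mul_left _ _ hc] at this
  by_cases hs : g z₀ ∈ slitPlane
  · exact ⟨1, by simp, key 1 one_ne_zero (by simpa using hs)⟩
  · refine ⟨-1, by simp, key (-1) (by norm_num) ?_⟩
    rw [Complex.mem_slitPlane_iff] at hs ⊢
    push_neg at hs
    have him : (g z₀).im = 0 := hs.2
    have hre : (g z₀).re < 0 := by
      rcases lt_or_eq_of_le hs.1 with h | h
      · exact h
      · exact absurd (by apply Complex.ext <;> simp [him, h.symm]) hgz
    left; simpa using hre

def Pfun (g : ℂ → ℂ) : ℂ → ℂ := fun z => deriv g z / g z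
def ufun (g : ℂ → ℂ) : ℂ → ℝ := fun z => -Real.log (‖g z‖)

variable {g : ℂ → ℂ}

lemma analyticP (hg : DifferentiableOn ℂ g UHP) (hne : ∀ z ∈ UHP, g z ≠ 0) :
    AnalyticOnNhd ℂ (Pfun g) UHP :=
  ((hg.analyticOnNhd isOpen_UHP).deriv).div (hg.analyticOnNhd isOpen_UHP) hne

lemma cont_u (hg : DifferentiableOn ℂ g UHP) (hne : ∀ z ∈ UHP, g z ≠ 0) :
    ContinuousOn (ufun g) UHP := by
  apply ContinuousOn.neg
  apply Real.continuousOn_log.comp (continuous_norm.comp_continuousOn hg.continuousOn)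
  intro z hz
  simp only [Function.comp, mem_compl_iff, mem_singleton_iff]
  exact fun h => hne z hz (by simpa using h)

lemma huy (hg : DifferentiableOn ℂ g UHP) (hne : ∀ z ∈ UHP, g z ≠ 0) (x y : ℝ) (hy : 0 < y) :
    HasDerivAt (fun t : ℝ => ufun g ((x:ℂ) + t * Complex.I))
      ((Pfun g ((x:ℂ) + y * Complex.I)).im) y := by
  obtain ⟨c, hc, hL⟩ := hasDerivAt_L hg hne (mem_UHP (x := x) hy)
  have h2 : HasDerivAt (fun t : ℝ => Complex.log (c * g ((x:ℂ) + t * Complex.I)))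
      (Complex.I * (deriv g ((x:ℂ) + y * Complex.I) / g ((x:ℂ) + y * Complex.I))) y :=
    comp_line hL rfl (hasDerivAt_vert x y)
  have h3 : HasDerivAt (fun t : ℝ => -(Complex.log (c * g ((x:ℂ) + t * Complex.I))).re) _ y :=
    (hasDerivAt_re' h2).neg
  have heq : (fun t : ℝ => -(Complex.log (c * g ((x:ℂ) + t * Complex.I))).re)
      = (fun t : ℝ => ufun g ((x:ℂ) + t * Complex.I)) := by
    funext t; rw [Complex.log_re, norm_mul, hc, one_mul, ufun]
  rw [heq] at h3
  convert h3 using 1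
  simp [Pfun, Complex.mul_re]

lemma hux (hg : DifferentiableOn ℂ g UHP) (hne : ∀ z ∈ UHP, g z ≠ 0) (x y : ℝ) (hy : 0 < y) :
    HasDerivAt (fun t : ℝ => ufun g ((t:ℂ) + y * Complex.I))
      (-(Pfun g ((x:ℂ) + y * Complex.I)).re) x := by
  obtain ⟨c, hc, hL⟩ := hasDerivAt_L hg hne (mem_UHP (x := x) hy)
  have h2 : HasDerivAt (fun t : ℝ => Complex.log (c * g ((t:ℂ) + y * Complex.I)))
      (1 * (deriv g ((x:ℂ) + y * Complex.I) / g ((x:ℂ) + y * Complex.I))) x :=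
    comp_line hL rfl (hasDerivAt_horiz x y)
  have h3 : HasDerivAt (fun t : ℝ => -(Complex.log (c * g ((t:ℂ) + y * Complex.I))).re) _ x :=
    (hasDerivAt_re' h2).neg
  have heq : (fun t : ℝ => -(Complex.log (c * g ((t:ℂ) + y * Complex.I))).re)
      = (fun t : ℝ => ufun g ((t:ℂ) + y * Complex.I)) := by
    funext t; rw [Complex.log_re, norm_mul, hc, one_mul, ufun]
  rw [heq] at h3
  convert h3 using 1
  simp [Pfun]

lemma huyy (hg : DifferentiableOn ℂ g UHP) (hne : ∀ z ∈ UHP, g z ≠ 0) (x y : ℝ) (hy : 0 < y) :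
    HasDerivAt (fun t : ℝ => (Pfun g ((x:ℂ) + t * Complex.I)).im)
      ((deriv (Pfun g) ((x:ℂ) + y * Complex.I)).re) y := by
  have hP : HasDerivAt (Pfun g) (deriv (Pfun g) ((x:ℂ) + y * Complex.I)) ((x:ℂ) + y * Complex.I) :=
    ((analyticP hg hne _ (mem_UHP hy)).differentiableAt).hasDerivAt
  have h2 := comp_line (γ := fun t : ℝ => (x:ℂ) + t * Complex.I) hP rfl (hasDerivAt_vert x y)
  have h3 := hasDerivAt_im' h2
  convert h3 using 1
  simp [Complex.mul_im]

lemma huxx (hg : DifferentiableOn ℂ g UHP) (hne : ∀ z ∈ UHP, g z ≠ 0) (x y : ℝ) (hy : 0 < y) :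
    HasDerivAt (fun t : ℝ => -((Pfun g ((t:ℂ) + y * Complex.I)).re))
      (-(deriv (Pfun g) ((x:ℂ) + y * Complex.I)).re) x := by
  have hP : HasDerivAt (Pfun g) (deriv (Pfun g) ((x:ℂ) + y * Complex.I)) ((x:ℂ) + y * Complex.I) :=
    ((analyticP hg hne _ (mem_UHP hy)).differentiableAt).hasDerivAt
  have h2 := comp_line (γ := fun t : ℝ => (t:ℂ) + y * Complex.I) hP rfl (hasDerivAt_horiz x y)
  have h3 : HasDerivAt (fun t : ℝ => -((Pfun g ((t:ℂ) + y * Complex.I)).re)) _ x :=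
    (hasDerivAt_re' h2).neg
  convert h3 using 1
  simp


lemma param_hasDerivAt (f f' : ℂ → ℝ) {w : ℝ → ℝ} (hw : Continuous w) {a b : ℝ} (hab : a ≤ b)
    (hfc : ContinuousOn f UHP) (hf'c : ContinuousOn f' UHP)
    (hd : ∀ x y : ℝ, 0 < y → HasDerivAt (fun t : ℝ => f ((x:ℂ) + t * Complex.I))
      (f' ((x:ℂ) + y * Complex.I)) y)
    {y₀ : ℝ} (hy₀ : 0 < y₀) :
    HasDerivAt (fun y : ℝ => ∫ x in a..b, f ((x:ℂ) + (y:ℂ) * Complex.I) * w x)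
      (∫ x in a..b, f' ((x:ℂ) + (y₀:ℂ) * Complex.I) * w x) y₀ := by
  have hhalf : 0 < y₀ / 2 := by positivity
  have slice : ∀ (F : ℂ → ℝ), ContinuousOn F UHP → ∀ y : ℝ, 0 < y →
      ContinuousOn (fun x : ℝ => F ((x:ℂ) + y * Complex.I) * w x) (uIcc a b) := by
    intro F hF y hy
    apply ContinuousOn.mul _ hw.continuousOn
    apply hF.comp ((Complex.continuous_ofReal.add continuous_const).continuousOn)
    intro x _; exact mem_UHP hy
  obtain ⟨C, hC⟩ : ∃ C, ∀ p ∈ (Icc a b ×ˢ Icc (y₀/2) (y₀ + y₀/2) : Set (ℝ × ℝ)),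
      ‖f' ((p.1:ℂ) + p.2 * Complex.I) * w p.1‖ ≤ C := by
    apply (isCompact_Icc.prod isCompact_Icc).exists_bound_of_continuousOn
    apply ContinuousOn.mul
    · apply hf'c.comp
      · exact ((Complex.continuous_ofReal.comp continuous_fst).add
          ((Complex.continuous_ofReal.comp continuous_snd).mul continuous_const)).continuousOn
      · rintro ⟨x, y⟩ ⟨-, hy⟩
        exact mem_UHP (lt_of_lt_of_le hhalf hy.1)
    · exact (hw.comp continuous_fst).continuousOn
  have main := intervalIntegral.hasDerivAt_integral_of_dominated_loc_of_deriv_le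
    (F := fun (y : ℝ) (x : ℝ) => f ((x:ℂ) + (y:ℂ) * Complex.I) * w x)
    (F' := fun (y : ℝ) (x : ℝ) => f' ((x:ℂ) + (y:ℂ) * Complex.I) * w x)
    (bound := fun _ => C) (a := a) (b := b) (μ := volume) (x₀ := y₀) (Metric.ball_mem_nhds y₀ hhalf) ?_ ?_ ?_ ?_ ?_ ?_
  · exact main.2
  · filter_upwards [Ioi_mem_nhds (by linarith : y₀/2 < y₀)] with y hy
    exact ((slice f hfc y (lt_trans hhalf hy)).mono uIoc_subset_uIcc).aestronglyMeasurable
      measurableSet_uIoc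
  · exact (slice f hfc y₀ hy₀).intervalIntegrable
  · exact ((slice f' hf'c y₀ hy₀).mono uIoc_subset_uIcc).aestronglyMeasurable measurableSet_uIoc
  · apply Filter.Eventually.of_forall
    intro t ht y hyb
    rw [Real.ball_eq_Ioo] at hyb
    refine hC (t, y) ⟨?_, ?_⟩
    · rw [uIoc_of_le hab] at ht; exact Ioc_subset_Icc_self ht
    · constructor
      · linarith [hyb.1]
      · linarith [hyb.2]
  · exact intervalIntegrable_const
  · apply Filter.Eventually.of_forall
    intro t ht y hyb
    rw [Real.ball_eq_Ioo] at hyb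
    have hypos : 0 < y := by linarith [hyb.1]
    exact (hd t y hypos).mul_const (w t)

lemma ibp_bound (U1 U1' U1'' : ℝ → ℝ) (a : ℝ)
    (hU1 : ∀ x ∈ uIcc a (a+1), HasDerivAt U1 (U1' x) x)
    (hU1' : ∀ x ∈ uIcc a (a+1), HasDerivAt U1' (U1'' x) x)
    (hc' : ContinuousOn U1' (uIcc a (a+1))) (hc'' : ContinuousOn U1'' (uIcc a (a+1)))
    (hnn : ∀ x ∈ Icc a (a+1), 0 ≤ U1 x) :
    (∫ x in a..(a+1), (-U1'' x) * Real.sin (Real.pi * (x - a)))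
      ≤ Real.pi^2 * ∫ x in a..(a+1), U1 x * Real.sin (Real.pi * (x - a)) := by
  have hπ : 0 < Real.pi := Real.pi_pos
  set w : ℝ → ℝ := fun x => Real.sin (Real.pi * (x - a)) with hwdef
  set w' : ℝ → ℝ := fun x => Real.pi * Real.cos (Real.pi * (x - a)) with hw'def
  have hinner : ∀ x : ℝ, HasDerivAt (fun x : ℝ => Real.pi * (x - a)) Real.pi x := by
    intro x; simpa using ((hasDerivAt_id x).sub_const a).const_mul Real.pi
  have hwderiv : ∀ x : ℝ, HasDerivAt w (w' x) x := by
    intro x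
    simpa [hw'def, mul_comm, Function.comp_def] using (Real.hasDerivAt_sin (Real.pi * (x - a))).comp x (hinner x)
  have hw'deriv : ∀ x : ℝ, HasDerivAt w' (-Real.pi^2 * w x) x := by
    intro x
    have := ((Real.hasDerivAt_cos (Real.pi * (x - a))).comp x (hinner x)).const_mul Real.pi
    have : HasDerivAt (fun y => Real.pi * Real.cos (Real.pi * (y - a))) _ x := this
    rw [hw'def]
    convert this using 1
    simp [hwdef]; ring
  have hwcont : Continuous w := by
    apply Real.continuous_sin.comp; continuity
  have hw'cont : Continuous w' := by
    apply Continuous.mul continuous_const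
    apply Real.continuous_cos.comp; continuity
  have I1 : ∫ x in a..(a+1), w x * U1'' x
      = w (a+1) * U1' (a+1) - w a * U1' a - ∫ x in a..(a+1), w' x * U1' x :=
    intervalIntegral.integral_mul_deriv_eq_deriv_mul (fun x _ => hwderiv x) hU1'
      (hw'cont.intervalIntegrable a (a+1)) (hc''.intervalIntegrable)
  have I2 : ∫ x in a..(a+1), w' x * U1' x
      = w' (a+1) * U1 (a+1) - w' a * U1 a - ∫ x in a..(a+1), (-Real.pi^2 * w x) * U1 x :=
    intervalIntegral.integral_mul_deriv_eq_deriv_mul (fun x _ => hw'deriv x) hU1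
      (((continuous_const.mul hwcont)).intervalIntegrable a (a+1)) (hc'.intervalIntegrable)
  have hwa : w a = 0 := by simp [hwdef]
  have hwb : w (a+1) = 0 := by
    have : Real.pi * (a + 1 - a) = Real.pi := by ring
    simp [hwdef, this]
  have hw'a : w' a = Real.pi := by simp [hw'def]
  have hw'b : w' (a+1) = -Real.pi := by
    have : Real.pi * (a + 1 - a) = Real.pi := by ring
    simp [hw'def, this]
  have e1 : ∫ x in a..(a+1), (-U1'' x) * w x = -(∫ x in a..(a+1), w x * U1'' x) := by
    rw [← intervalIntegral.integral_neg]
    apply intervalIntegral.integral_congr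
    intro x _; ring
  have e2 : ∫ x in a..(a+1), (-Real.pi^2 * w x) * U1 x
      = -Real.pi^2 * ∫ x in a..(a+1), w x * U1 x := by
    rw [← intervalIntegral.integral_const_mul]
    apply intervalIntegral.integral_congr
    intro x _; ring
  have e3 : ∫ x in a..(a+1), w x * U1 x = ∫ x in a..(a+1), U1 x * w x :=
    intervalIntegral.integral_congr (fun x _ => mul_comm _ _)
  have hU1a : 0 ≤ U1 a := hnn a ⟨le_refl a, by linarith⟩
  have hU1b : 0 ≤ U1 (a+1) := hnn (a+1) ⟨by linarith, le_refl _⟩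
  rw [e1, I1, I2, hwa, hwb, hw'a, hw'b, e2, e3]
  nlinarith [mul_nonneg hπ.le hU1a, mul_nonneg hπ.le hU1b]

lemma ode_bound (κ : ℝ) (hκ : 0 < κ) (h h1 h2 : ℝ → ℝ)
    (hh : ∀ y, 0 < y → HasDerivAt h (h1 y) y)
    (hh1 : ∀ y, 0 < y → HasDerivAt h1 (h2 y) y)
    (hineq : ∀ y, 0 < y → h2 y ≤ κ^2 * h y)
    (hpos : ∀ y, 0 < y → 0 ≤ h y) :
    ∃ C, ∀ y ∈ Ioc (0:ℝ) 1, h y ≤ C := by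
  set q : ℝ → ℝ := fun y => Real.exp (κ*y) * (h1 y - κ * h y) with hqdef
  have hq : ∀ y, 0 < y → HasDerivAt q (Real.exp (κ*y) * (h2 y - κ^2 * h y)) y := by
    intro y hy
    have hi : HasDerivAt (fun y : ℝ => κ * y) κ y := by
      simpa using (hasDerivAt_id y).const_mul κ
    have he : HasDerivAt (fun y => Real.exp (κ*y)) (Real.exp (κ*y) * κ) y :=
      (Real.hasDerivAt_exp (κ*y)).comp y hi
    have inner : HasDerivAt (fun y => h1 y - κ * h y) (h2 y - κ * h1 y) y :=
      (hh1 y hy).sub ((hh y hy).const_mul κ)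
    have : HasDerivAt (fun y => Real.exp (κ*y) * (h1 y - κ * h y)) _ y := he.mul inner
    rw [hqdef]
    convert this using 1
    ring
  have qanti : AntitoneOn q (Ioi 0) := by
    apply antitoneOn_of_deriv_nonpos (convex_Ioi 0)
    · intro y hy; exact (hq y hy).continuousAt.continuousWithinAt
    · rw [interior_Ioi]; intro y hy; exact (hq y hy).differentiableAt.differentiableWithinAt
    · rw [interior_Ioi]; intro y hy
      rw [(hq y hy).deriv]
      exact mul_nonpos_of_nonneg_of_nonpos (Real.exp_nonneg _)
        (sub_nonpos.2 (hineq y hy))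
  have hlow : ∀ t ∈ Ioc (0:ℝ) 1, -|q 1| ≤ h1 t - κ * h t := by
    intro t ht
    have hq1 : q 1 ≤ q t := qanti (mem_Ioi.2 ht.1) (mem_Ioi.2 one_pos) ht.2
    have hexp1 : 1 ≤ Real.exp (κ*t) := Real.one_le_exp (mul_nonneg hκ.le ht.1.le)
    have habs : -|q 1| ≤ q 1 := neg_abs_le _
    rcases le_or_gt 0 (h1 t - κ * h t) with hv | hv
    · have : (0:ℝ) ≤ |q 1| := abs_nonneg _
      linarith
    · have hqt : q t ≤ h1 t - κ * h t := by
        have : Real.exp (κ*t) * (h1 t - κ * h t) ≤ 1 * (h1 t - κ * h t) :=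
          mul_le_mul_of_nonpos_right hexp1 hv.le
        simpa [hqdef] using this
      linarith
  refine ⟨h 1 + |q 1|, ?_⟩
  intro y hy
  set r : ℝ → ℝ := fun t => h t + |q 1| * t with hrdef
  have hr : ∀ t, 0 < t → HasDerivAt r (h1 t + |q 1|) t := by
    intro t ht
    have : HasDerivAt (fun t : ℝ => |q 1| * t) (|q 1|) t := by
      simpa using (hasDerivAt_id t).const_mul (|q 1|)
    exact (hh t ht).add this
  have rmono : MonotoneOn r (Ioc 0 1) := by
    apply monotoneOn_of_deriv_nonneg (convex_Ioc 0 1)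
    · intro t ht; exact (hr t ht.1).continuousAt.continuousWithinAt
    · rw [interior_Ioc]; intro t ht
      exact (hr t ht.1).differentiableAt.differentiableWithinAt
    · rw [interior_Ioc]; intro t ht
      rw [(hr t ht.1).deriv]
      have h1t := hlow t ⟨ht.1, ht.2.le⟩
      have := hpos t ht.1
      nlinarith
  have h1mem : (1:ℝ) ∈ Ioc (0:ℝ) 1 := ⟨one_pos, le_refl _⟩
  have := rmono hy h1mem hy.2
  have hy0 : 0 ≤ |q 1| * y := mul_nonneg (abs_nonneg _) hy.1.le
  simp only [hrdef] at this
  nlinarith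

lemma exists_interval (E : Set ℝ) (hEpos : 0 < volume E) :
    ∃ a : ℝ, 0 < volume (E ∩ Ioo a (a+1)) := by
  by_contra hcon
  push_neg at hcon
  have hnull : ∀ k : ℤ, volume (E ∩ Ico (k:ℝ) ((k:ℝ)+1)) = 0 := by
    intro k
    have hsub : E ∩ Ico (k:ℝ) ((k:ℝ)+1) ⊆ (E ∩ Ioo (k:ℝ) ((k:ℝ)+1)) ∪ {(k:ℝ)} := by
      rintro x ⟨hx, h1, h2⟩
      rcases eq_or_lt_of_le h1 with h | h
      · exact Or.inr (by simp [← h])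
      · exact Or.inl ⟨hx, h, h2⟩
    apply measure_mono_null hsub
    apply measure_union_null
    · exact le_antisymm (hcon (k:ℝ)) (by simp)
    · exact measure_singleton _
  have hEeq : E = ⋃ k : ℤ, E ∩ Ico (k:ℝ) ((k:ℝ)+1) := by
    rw [← inter_iUnion]
    rw [iUnion_Ico_intCast, inter_univ]
  have : volume E = 0 := by
    rw [hEeq]
    exact measure_iUnion_null hnull
  rw [this] at hEpos
  exact lt_irrefl _ hEpos


theorem no_blowup (g : ℂ → ℂ) (hg : DifferentiableOn ℂ g UHP)
    (hne : ∀ z ∈ UHP, g z ≠ 0) (hbd : ∀ z ∈ UHP, ‖g z‖ ≤ 1)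
    (E : Set ℝ) (hE : MeasurableSet E) (hEpos : 0 < volume E)
    (hlim : ∀ lam ∈ E,
      Tendsto (fun ε : ℝ => g ((lam:ℂ) + ε * Complex.I)) (𝓝[>] 0) (𝓝 0)) :
    False := by
  obtain ⟨a, ha⟩ := exists_interval E hEpos
  have hπ := Real.pi_pos
  have hPc : ContinuousOn (Pfun g) UHP := (analyticP hg hne).continuousOn
  have hdPc : ContinuousOn (deriv (Pfun g)) UHP := (analyticP hg hne).deriv.continuousOn
  have huc : ContinuousOn (ufun g) UHP := cont_u hg hne
  have hunn : ∀ z ∈ UHP, 0 ≤ ufun g z := by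
    intro z hz
    simp only [ufun, neg_nonneg]
    exact Real.log_nonpos (norm_nonneg _) (hbd z hz)
  set w : ℝ → ℝ := fun x => Real.sin (Real.pi * (x - a)) with hwdef
  have hwcont : Continuous w := by
    apply Real.continuous_sin.comp; continuity
  have hwnn : ∀ x ∈ Icc a (a+1), 0 ≤ w x := by
    intro x hx
    apply Real.sin_nonneg_of_nonneg_of_le_pi
    · nlinarith [hx.1]
    · nlinarith [hx.2]
  set h : ℝ → ℝ := fun y => ∫ x in a..(a+1), ufun g ((x:ℂ) + (y:ℂ) * Complex.I) * w x with hhdef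
  set h1 : ℝ → ℝ :=
    fun y => ∫ x in a..(a+1), (Pfun g ((x:ℂ) + (y:ℂ) * Complex.I)).im * w x with hh1def
  set h2 : ℝ → ℝ :=
    fun y => ∫ x in a..(a+1), (deriv (Pfun g) ((x:ℂ) + (y:ℂ) * Complex.I)).re * w x with hh2def
  have hab : a ≤ a + 1 := by linarith
  have hh : ∀ y, 0 < y → HasDerivAt h (h1 y) y := fun y hy =>
    param_hasDerivAt (ufun g) (fun z => (Pfun g z).im) hwcont hab huc
      (Complex.continuous_im.comp_continuousOn hPc) (huy hg hne) hy
  have hh1 : ∀ y, 0 < y → HasDerivAt h1 (h2 y) y := fun y hy =>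
    param_hasDerivAt (fun z => (Pfun g z).im) (fun z => (deriv (Pfun g) z).re) hwcont hab
      (Complex.continuous_im.comp_continuousOn hPc)
      (Complex.continuous_re.comp_continuousOn hdPc) (huyy hg hne) hy
  have hineq : ∀ y, 0 < y → h2 y ≤ Real.pi^2 * h y := by
    intro y hy
    have lineCont : Continuous (fun x : ℝ => (x:ℂ) + (y:ℂ) * Complex.I) := by continuity
    have lineMaps : ∀ x : ℝ, ((x:ℂ) + (y:ℂ) * Complex.I) ∈ UHP := fun x => mem_UHP hy
    have hU1 : ∀ x ∈ uIcc a (a+1),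
        HasDerivAt (fun t : ℝ => ufun g ((t:ℂ) + (y:ℂ) * Complex.I))
          ((fun t : ℝ => -(Pfun g ((t:ℂ) + (y:ℂ) * Complex.I)).re) x) x :=
      fun x _ => hux hg hne x y hy
    have hU1' : ∀ x ∈ uIcc a (a+1),
        HasDerivAt (fun t : ℝ => -(Pfun g ((t:ℂ) + (y:ℂ) * Complex.I)).re)
          ((fun t : ℝ => -(deriv (Pfun g) ((t:ℂ) + (y:ℂ) * Complex.I)).re) x) x :=
      fun x _ => huxx hg hne x y hy
    have hcont' : ContinuousOn (fun t : ℝ => -(Pfun g ((t:ℂ) + (y:ℂ) * Complex.I)).re)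
        (uIcc a (a+1)) :=
      ((Complex.continuous_re.comp_continuousOn
        (hPc.comp lineCont.continuousOn (fun x _ => lineMaps x))).neg)
    have hcont'' : ContinuousOn (fun t : ℝ => -(deriv (Pfun g) ((t:ℂ) + (y:ℂ) * Complex.I)).re)
        (uIcc a (a+1)) :=
      ((Complex.continuous_re.comp_continuousOn
        (hdPc.comp lineCont.continuousOn (fun x _ => lineMaps x))).neg)
    have hnn : ∀ x ∈ Icc a (a+1), 0 ≤ ufun g ((x:ℂ) + (y:ℂ) * Complex.I) :=
      fun x _ => hunn _ (lineMaps x)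
    have key := ibp_bound _ _ _ a hU1 hU1' hcont' hcont'' hnn
    simp only [neg_neg] at key
    exact key
  have hpos : ∀ y, 0 < y → 0 ≤ h y := by
    intro y hy
    apply intervalIntegral.integral_nonneg hab
    intro x hx
    exact mul_nonneg (hunn _ (mem_UHP hy)) (hwnn x hx)
  obtain ⟨C, hC⟩ := ode_bound Real.pi hπ h h1 h2 hh hh1 hineq hpos
  -- Fatou contradiction
  set yseq : ℕ → ℝ := fun n => 1/(n+1) with hyseqdef
  have hymem : ∀ n, yseq n ∈ Ioc (0:ℝ) 1 := by
    intro n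
    have h1n : (0:ℝ) < n+1 := by positivity
    constructor
    · positivity
    · rw [div_le_one h1n]; linarith [Nat.cast_nonneg (α := ℝ) n]
  have hyseqtend : Tendsto yseq atTop (𝓝[>] 0) := by
    rw [tendsto_nhdsWithin_iff]
    constructor
    · simpa [hyseqdef] using tendsto_one_div_add_atTop_nhds_zero_nat (𝕜 := ℝ)
    · exact Eventually.of_forall (fun n => (hymem n).1)
  have hsliceCont : ∀ n, ContinuousOn
      (fun x : ℝ => ufun g ((x:ℂ) + (yseq n : ℂ) * Complex.I) * w x) (Icc a (a+1)) := by
    intro n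
    apply ContinuousOn.mul _ hwcont.continuousOn
    apply huc.comp (by continuity : Continuous
      (fun x : ℝ => (x:ℂ) + (yseq n : ℂ) * Complex.I)).continuousOn
    intro x _; exact mem_UHP (hymem n).1
  have hmeas : ∀ n, AEMeasurable
      (fun x : ℝ => ENNReal.ofReal (ufun g ((x:ℂ) + (yseq n : ℂ) * Complex.I) * w x))
      (volume.restrict (Ioc a (a+1))) := by
    intro n
    exact ENNReal.measurable_ofReal.comp_aemeasurable
      (((hsliceCont n).mono Ioc_subset_Icc_self).aemeasurable measurableSet_Ioc)
  have hμbound : ∀ n, (∫⁻ x in Ioc a (a+1),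
      ENNReal.ofReal (ufun g ((x:ℂ) + (yseq n : ℂ) * Complex.I) * w x)) ≤ ENNReal.ofReal C := by
    intro n
    have hint : IntegrableOn (fun x : ℝ => ufun g ((x:ℂ) + (yseq n : ℂ) * Complex.I) * w x)
        (Ioc a (a+1)) volume := ((hsliceCont n).integrableOn_Icc).mono_set Ioc_subset_Icc_self
    have hnnae : 0 ≤ᶠ[ae (volume.restrict (Ioc a (a+1)))]
        (fun x : ℝ => ufun g ((x:ℂ) + (yseq n : ℂ) * Complex.I) * w x) := by
      filter_upwards [ae_restrict_mem measurableSet_Ioc] with x hx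
      exact mul_nonneg (hunn _ (mem_UHP (hymem n).1)) (hwnn x (Ioc_subset_Icc_self hx))
    rw [← ofReal_integral_eq_lintegral_ofReal hint hnnae]
    apply ENNReal.ofReal_le_ofReal
    rw [← intervalIntegral.integral_of_le hab]
    exact hC _ (hymem n)
  have hfatou := MeasureTheory.lintegral_liminf_le' (u := atTop) hmeas
  have hub : liminf (fun n => ∫⁻ x in Ioc a (a+1),
      ENNReal.ofReal (ufun g ((x:ℂ) + (yseq n : ℂ) * Complex.I) * w x)) atTop
      ≤ ENNReal.ofReal C :=
    Filter.liminf_le_of_frequently_le ((Eventually.of_forall hμbound).frequently)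
  have hliminf : ∀ x ∈ E ∩ Ioo a (a+1),
      liminf (fun n => ENNReal.ofReal (ufun g ((x:ℂ) + (yseq n : ℂ) * Complex.I) * w x)) atTop
        = ⊤ := by
    rintro x ⟨hxE, hxI⟩
    have hwx : 0 < w x := by
      apply Real.sin_pos_of_pos_of_lt_pi
      · nlinarith [hxI.1]
      · nlinarith [hxI.2]
    have htend : Tendsto (fun ε : ℝ => ufun g ((x:ℂ) + (ε:ℂ) * Complex.I)) (𝓝[>] 0) atTop := by
      have habs : Tendsto (fun ε : ℝ => ‖g ((x:ℂ) + (ε:ℂ) * Complex.I)‖)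
          (𝓝[>] 0) (𝓝[>] 0) := by
        rw [tendsto_nhdsWithin_iff]
        constructor
        · have := (continuous_norm.tendsto 0).comp (hlim x hxE)
          simpa [Function.comp_def] using this
        · filter_upwards [self_mem_nhdsWithin] with ε hε
          exact norm_pos_iff.mpr (hne _ (mem_UHP hε))
      have hlog := Real.tendsto_log_nhdsGT_zero.comp habs
      exact tendsto_neg_atBot_atTop.comp hlog
    have hseq : Tendsto (fun n => ufun g ((x:ℂ) + (yseq n : ℂ) * Complex.I) * w x) atTop atTop :=
      (htend.comp hyseqtend).atTop_mul_const hwx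
    exact (ENNReal.tendsto_ofReal_atTop.comp hseq).liminf_eq
  have hlower : (⊤:ENNReal) ≤ ∫⁻ x in Ioc a (a+1),
      liminf (fun n => ENNReal.ofReal (ufun g ((x:ℂ) + (yseq n : ℂ) * Complex.I) * w x)) atTop := by
    have step1 : (⊤:ENNReal) = ∫⁻ _ in E ∩ Ioo a (a+1), (⊤:ENNReal) := by
      rw [MeasureTheory.setLIntegral_const]
      rw [ENNReal.top_mul ha.ne']
    rw [step1]
    calc ∫⁻ _ in E ∩ Ioo a (a+1), (⊤:ENNReal)
        ≤ ∫⁻ x in E ∩ Ioo a (a+1),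
            liminf (fun n => ENNReal.ofReal (ufun g ((x:ℂ) + (yseq n : ℂ) * Complex.I) * w x))
              atTop :=
          setLIntegral_mono' (hE.inter measurableSet_Ioo)
            (fun x hx => (hliminf x hx).symm.le)
      _ ≤ _ := lintegral_mono_set
          ((inter_subset_right).trans Ioo_subset_Ioc_self)
  have : (⊤:ENNReal) ≤ ENNReal.ofReal C := le_trans hlower (le_trans hfatou hub)
  exact lt_irrefl ⊤ (lt_of_le_of_lt this ENNReal.ofReal_lt_top)

end HerglotzAux2718

/-- A Herglotz function with vanishing normal boundary values on a set of
positive Lebesgue measure vanishes identically. -/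
theorem herglotz_zero_boundary_values (m : ℂ → ℂ)
    (hanal : DifferentiableOn ℂ m {z : ℂ | 0 < z.im})
    (him : ∀ z : ℂ, 0 < z.im → 0 ≤ (m z).im)
    (E : Set ℝ) (hE : MeasurableSet E) (hEpos : 0 < volume E)
    (hlim : ∀ lam ∈ E,
      Tendsto (fun ε : ℝ => m (lam + ε * Complex.I)) (𝓝[>] 0) (𝓝 0)) :
    ∀ z : ℂ, 0 < z.im → m z = 0 := by
  have han : AnalyticOnNhd ℂ m HerglotzAux2718.UHP :=
    hanal.analyticOnNhd HerglotzAux2718.isOpen_UHP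
  have hconn : IsPreconnected HerglotzAux2718.UHP := (convex_halfSpace_im_gt 0).isPreconnected
  obtain ⟨lam₀, hlam₀⟩ : E.Nonempty := nonempty_of_measure_ne_zero hEpos.ne'
  rcases han.is_constant_or_isOpen hconn with ⟨wc, hwc⟩ | hopen
  · -- constant case
    have hconst : Tendsto (fun ε : ℝ => m ((lam₀:ℂ) + ε * Complex.I)) (𝓝[>] 0) (𝓝 wc) := by
      apply tendsto_const_nhds.congr'
      filter_upwards [self_mem_nhdsWithin] with ε hε
      exact (hwc _ (HerglotzAux2718.mem_UHP hε)).symm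
    have hwc0 : wc = 0 := tendsto_nhds_unique hconst (hlim lam₀ hlam₀)
    intro z hz
    rw [hwc z hz, hwc0]
  · -- nonconstant case : contradiction
    exfalso
    have him' : ∀ z ∈ HerglotzAux2718.UHP, 0 < (m z).im := by
      intro z₀ hz₀
      rcases lt_or_eq_of_le (him z₀ hz₀) with hlt | heqim
      · exact hlt
      · exfalso
        have hopen' : IsOpen (m '' HerglotzAux2718.UHP) :=
          hopen _ (subset_refl _) HerglotzAux2718.isOpen_UHP
        have hmem : m z₀ ∈ m '' HerglotzAux2718.UHP := ⟨z₀, hz₀, rfl⟩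
        have hcont : Continuous (fun t : ℝ => m z₀ - (t:ℂ) * Complex.I) := by continuity
        have hnhds : (fun t : ℝ => m z₀ - (t:ℂ) * Complex.I) ⁻¹' (m '' HerglotzAux2718.UHP)
            ∈ 𝓝 (0:ℝ) := by
          apply hcont.continuousAt.preimage_mem_nhds
          rw [show m z₀ - ((0:ℝ):ℂ) * Complex.I = m z₀ by simp]
          exact hopen'.mem_nhds hmem
        rcases Metric.mem_nhds_iff.1 hnhds with ⟨ε, hε, hsub⟩
        have hballmem : (ε/2 : ℝ) ∈ Metric.ball (0:ℝ) ε := by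
          rw [Metric.mem_ball, Real.dist_eq]
          rw [abs_of_pos (by linarith)]
          linarith
        obtain ⟨z₁, hz₁, heq1⟩ := hsub hballmem
        have him1 : (m z₁).im = (m z₀).im - ε/2 := by
          rw [heq1]
          simp
        have := him z₁ hz₁
        rw [him1, ← heqim] at this
        linarith
    set g : ℂ → ℂ := fun z => Complex.I * m z / (m z + Complex.I) with hgdef
    have hmne : ∀ z ∈ HerglotzAux2718.UHP, m z ≠ 0 := by
      intro z hz h0
      have := him' z hz
      rw [h0] at this
      simp at this
    have hdenne : ∀ z ∈ HerglotzAux2718.UHP, m z + Complex.I ≠ 0 := by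
      intro z hz h0
      have h1 : (m z + Complex.I).im = (m z).im + 1 := by simp
      rw [h0] at h1
      simp at h1
      have := him' z hz
      linarith
    have hgdiff : DifferentiableOn ℂ g HerglotzAux2718.UHP := by
      apply DifferentiableOn.div
      · exact hanal.const_mul Complex.I
      · exact hanal.add_const Complex.I
      · exact hdenne
    have hgne : ∀ z ∈ HerglotzAux2718.UHP, g z ≠ 0 := fun z hz =>
      div_ne_zero (mul_ne_zero Complex.I_ne_zero (hmne z hz)) (hdenne z hz)
    have hgbd : ∀ z ∈ HerglotzAux2718.UHP, ‖g z‖ ≤ 1 := by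
      intro z hz
      simp only [hgdef, norm_div, norm_mul, Complex.norm_I, one_mul]
      rw [div_le_one (norm_pos_iff.mpr (hdenne z hz))]
      have h1 : Complex.normSq (m z) ≤ Complex.normSq (m z + Complex.I) := by
        simp only [Complex.normSq_apply, Complex.add_re, Complex.add_im, Complex.I_re,
          Complex.I_im, add_zero]
        nlinarith [him z hz]
      calc ‖m z‖ = Real.sqrt (Complex.normSq (m z)) := Complex.norm_def _
        _ ≤ Real.sqrt (Complex.normSq (m z + Complex.I)) := Real.sqrt_le_sqrt h1
        _ = ‖m z + Complex.I‖ := (Complex.norm_def _).symm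
    have hglim : ∀ lam ∈ E,
        Tendsto (fun ε : ℝ => g ((lam:ℂ) + ε * Complex.I)) (𝓝[>] 0) (𝓝 0) := by
      intro lam hlam
      have hm := hlim lam hlam
      have h1 : Tendsto (fun ε : ℝ => Complex.I * m ((lam:ℂ) + ε * Complex.I)) (𝓝[>] 0)
          (𝓝 (Complex.I * 0)) := tendsto_const_nhds.mul hm
      have h2 : Tendsto (fun ε : ℝ => m ((lam:ℂ) + ε * Complex.I) + Complex.I) (𝓝[>] 0)
          (𝓝 (0 + Complex.I)) := hm.add tendsto_const_nhds
      have h3 : Tendsto (fun ε : ℝ => Complex.I * m ((lam:ℂ) + ε * Complex.I) /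
          (m ((lam:ℂ) + ε * Complex.I) + Complex.I)) (𝓝[>] 0)
          (𝓝 (Complex.I * 0 / (0 + Complex.I))) := h1.div h2 (by simp [Complex.I_ne_zero])
      simpa [hgdef] using h3
    exact HerglotzAux2718.no_blowup g hgdiff hgne hgbd E hE hEpos hglim
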